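/- Let k be a field and V = k[X₁,…,Xₙ,Y,Z,T]/(X^d Y − Z^r, X^e T − Y^s) where d, e ∈ ℤ^n have all entries ≥ 1, r ≥ 2 and s ≥ 2. Then V is an integral domain. -/

import Mathlib

open MvPolynomial

noncomputable section

/-- The defining ideal `(X^d Y − Z^r, X^e T − Y^s)` inside
`k[X₁,…,Xₙ,Y,Z,T] = MvPolynomial (Fin n ⊕ Fin 3) k` (`inr 0 = Y`, `inr 1 = Z`,
`inr 2 = T`). -/
def vIdeal (k : Type*) [Field k] (n : ℕ) (d e : Fin n → ℕ) (r s : ℕ) :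
    Ideal (MvPolynomial (Fin n ⊕ Fin 3) k) :=
  Ideal.span
    {(∏ i, MvPolynomial.X (Sum.inl i) ^ d i) * MvPolynomial.X (Sum.inr 0) -
       MvPolynomial.X (Sum.inr 1) ^ r,
     (∏ i, MvPolynomial.X (Sum.inl i) ^ e i) * MvPolynomial.X (Sum.inr 2) -
       MvPolynomial.X (Sum.inr 0) ^ s}

namespace VProof

lemma uniq {r x y c c' : ℕ} (hc : c < r) (hc' : c' < r) (h : r * x + c = r * y + c') :
    c = c' ∧ x = y := by
  have h1 : c % r = c := Nat.mod_eq_of_lt hc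
  have h2 : c' % r = c' := Nat.mod_eq_of_lt hc'
  have h3 : c = c' := by
    rw [← h1, ← h2, ← Nat.mul_add_mod r x c, ← Nat.mul_add_mod r y c', h]
  refine ⟨h3, ?_⟩
  subst h3
  have h4 : r * x = r * y := by omega
  exact Nat.eq_of_mul_eq_mul_left (lt_of_le_of_lt (Nat.zero_le _) hc) h4

variable {k : Type*} [Field k]

/-- target exponent group -/
abbrev GG (n : ℕ) : Type := (Fin n ⊕ Unit) →₀ ℤ

variable (n : ℕ) (d e : Fin n → ℕ) (r s : ℕ)

def Dv : GG n := ∑ i, Finsupp.single (Sum.inl i) (d i : ℤ)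

lemma Dv_apply_inl (i : Fin n) : Dv n d (Sum.inl i) = (d i : ℤ) := by
  rw [Dv, Finsupp.finset_sum_apply]
  simp [Finsupp.single_apply, Sum.inl.injEq]

lemma Dv_apply_inr : Dv n d (Sum.inr ()) = 0 := by
  rw [Dv, Finsupp.finset_sum_apply]
  simp [Finsupp.single_apply]

def gv : Fin n ⊕ Fin 3 → GG n :=
  Sum.elim (fun i => Finsupp.single (Sum.inl i) 1)
    ![Finsupp.single (Sum.inr ()) (r : ℤ) - Dv n d,
      Finsupp.single (Sum.inr ()) 1,
      Finsupp.single (Sum.inr ()) ((r : ℤ) * s) - ((s : ℤ) • Dv n d + Dv n e)]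

def psi : MvPolynomial (Fin n ⊕ Fin 3) k →ₐ[k] AddMonoidAlgebra k (GG n) :=
  aeval fun j => AddMonoidAlgebra.single (gv n d e r s j) 1

def LL (u : Fin n ⊕ Fin 3 →₀ ℕ) : GG n := ∑ j, u j • gv n d e r s j

lemma psi_monomial (u : Fin n ⊕ Fin 3 →₀ ℕ) (c : k) :
    psi n d e r s (monomial u c) = AddMonoidAlgebra.single (LL n d e r s u) c := by
  rw [psi, aeval_monomial, Finsupp.prod_fintype _ _ (fun j => pow_zero _)]
  simp only [AddMonoidAlgebra.single_pow, one_pow]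
  rw [AddMonoidAlgebra.prod_single, AddMonoidAlgebra.coe_algebraMap]
  simp [AddMonoidAlgebra.single_mul_single, LL]

lemma LL_apply_inl (u : Fin n ⊕ Fin 3 →₀ ℕ) (i : Fin n) :
    LL n d e r s u (Sum.inl i) =
      (u (Sum.inl i) : ℤ) - u (Sum.inr 0) * d i - u (Sum.inr 2) * ((s : ℤ) * d i + e i) := by
  rw [LL, Finsupp.finset_sum_apply, Fintype.sum_sum_type]
  rw [Fin.sum_univ_three]
  simp only [gv, Sum.elim_inl, Sum.elim_inr, Matrix.cons_val_zero, Matrix.cons_val_one,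
    Matrix.head_cons, Matrix.cons_val_two, Matrix.tail_cons, Finsupp.smul_apply,
    Finsupp.sub_apply, Finsupp.add_apply, Finsupp.single_apply, Dv_apply_inl]
  simp [Finsupp.single_apply, Sum.inl.injEq]
  ring

lemma LL_apply_inr (u : Fin n ⊕ Fin 3 →₀ ℕ) :
    LL n d e r s u (Sum.inr ()) =
      (u (Sum.inr 1) : ℤ) + r * u (Sum.inr 0) + r * s * u (Sum.inr 2) := by
  rw [LL, Finsupp.finset_sum_apply, Fintype.sum_sum_type]
  rw [Fin.sum_univ_three]
  simp only [gv, Sum.elim_inl, Sum.elim_inr, Matrix.cons_val_zero, Matrix.cons_val_one,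
    Matrix.head_cons, Matrix.cons_val_two, Matrix.tail_cons, Finsupp.smul_apply,
    Finsupp.sub_apply, Finsupp.add_apply, Finsupp.single_apply, Dv_apply_inr]
  simp [Finsupp.single_apply]
  ring

def F (a : Fin n → ℕ) (b c m : ℕ) : Fin n ⊕ Fin 3 →₀ ℕ :=
  (∑ i, Finsupp.single (Sum.inl i) (a i)) + Finsupp.single (Sum.inr 0) b +
    Finsupp.single (Sum.inr 1) c + Finsupp.single (Sum.inr 2) m

lemma F_apply_inl (a : Fin n → ℕ) (b c m : ℕ) (i : Fin n) :
    F n a b c m (Sum.inl i) = a i := by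
  simp only [F, Finsupp.add_apply, Finsupp.finset_sum_apply]
  simp [Finsupp.single_apply, Sum.inl.injEq]

lemma F_apply_inr (a : Fin n → ℕ) (b c m : ℕ) (j : Fin 3) :
    F n a b c m (Sum.inr j) = ![b, c, m] j := by
  simp only [F, Finsupp.add_apply, Finsupp.finset_sum_apply]
  fin_cases j <;> simp [Finsupp.single_apply]

lemma eq_F (u : Fin n ⊕ Fin 3 →₀ ℕ) :
    u = F n (fun i => u (Sum.inl i)) (u (Sum.inr 0)) (u (Sum.inr 1)) (u (Sum.inr 2)) := by
  ext j
  rcases j with i | j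
  · rw [F_apply_inl]
  · rw [F_apply_inr]; fin_cases j <;> simp

def Pm (a : Fin n → ℕ) (b c m : ℕ) : MvPolynomial (Fin n ⊕ Fin 3) k :=
  (∏ i, X (Sum.inl i) ^ a i) * X (Sum.inr 0) ^ b * X (Sum.inr 1) ^ c * X (Sum.inr 2) ^ m

lemma monomial_F (a : Fin n → ℕ) (b c m : ℕ) :
    (monomial (F n a b c m) (1 : k)) = Pm n a b c m := by
  have h : ∀ t : Finset (Fin n), (∏ i ∈ t, X (Sum.inl i) ^ a i : MvPolynomial (Fin n ⊕ Fin 3) k)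
      = monomial (∑ i ∈ t, Finsupp.single (Sum.inl i) (a i)) 1 := by
    intro t
    induction t using Finset.induction with
    | empty => simp
    | insert x t hx ih =>
      rw [Finset.prod_insert hx, Finset.sum_insert hx, ih, X_pow_eq_monomial, monomial_mul,
        one_mul]
  rw [Pm, h, X_pow_eq_monomial, X_pow_eq_monomial, X_pow_eq_monomial, monomial_mul, monomial_mul,
    monomial_mul, F]
  simp

lemma stepA (a : Fin n → ℕ) (b c m : ℕ) :
    (Pm n a b (c + r) m : MvPolynomial (Fin n ⊕ Fin 3) k) -
      Pm n (fun i => a i + d i) (b + 1) c m ∈ vIdeal k n d e r s := by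
  have h1 : (Pm n a b (c + r) m : MvPolynomial (Fin n ⊕ Fin 3) k) -
      Pm n (fun i => a i + d i) (b + 1) c m =
      -(Pm n a b c m * ((∏ i, X (Sum.inl i) ^ d i) * X (Sum.inr 0) - X (Sum.inr 1) ^ r)) := by
    simp only [Pm, pow_add, pow_succ, Finset.prod_mul_distrib]
    ring
  rw [h1]
  exact neg_mem (Ideal.mul_mem_left _ _ (Ideal.subset_span (by left; rfl)))

lemma stepB (a : Fin n → ℕ) (b c m : ℕ) :
    (Pm n a (b + s) c m : MvPolynomial (Fin n ⊕ Fin 3) k) -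
      Pm n (fun i => a i + e i) b c (m + 1) ∈ vIdeal k n d e r s := by
  have h1 : (Pm n a (b + s) c m : MvPolynomial (Fin n ⊕ Fin 3) k) -
      Pm n (fun i => a i + e i) b c (m + 1) =
      -(Pm n a b c m * ((∏ i, X (Sum.inl i) ^ e i) * X (Sum.inr 2) - X (Sum.inr 0) ^ s)) := by
    simp only [Pm, pow_add, pow_succ, Finset.prod_mul_distrib]
    ring
  rw [h1]
  exact neg_mem (Ideal.mul_mem_left _ _ (Ideal.subset_span (by right; rfl)))

lemma iterA : ∀ (q : ℕ) (a : Fin n → ℕ) (b c m : ℕ),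
    (Pm n a b (c + r * q) m : MvPolynomial (Fin n ⊕ Fin 3) k) -
      Pm n (fun i => a i + q * d i) (b + q) c m ∈ vIdeal k n d e r s := by
  intro q
  induction q with
  | zero => intro a b c m; simp
  | succ q ih =>
    intro a b c m
    have ec : c + r * (q + 1) = (c + r) + r * q := by ring
    have ea : (fun i => a i + (q + 1) * d i) = fun i => (a i + d i) + q * d i := by
      funext i; ring
    have eb : b + (q + 1) = (b + 1) + q := by ring
    rw [ec, ea, eb]
    have h2 := ih (fun i => a i + d i) (b + 1) c m
    have h1 := stepA (k := k) n d e r s a b (c + r * q) m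
    rw [show c + r * q + r = c + r + r * q by ring] at h1
    have h3 := add_mem h1 h2
    rwa [sub_add_sub_cancel] at h3

lemma iterB : ∀ (q : ℕ) (a : Fin n → ℕ) (b c m : ℕ),
    (Pm n a (b + s * q) c m : MvPolynomial (Fin n ⊕ Fin 3) k) -
      Pm n (fun i => a i + q * e i) b c (m + q) ∈ vIdeal k n d e r s := by
  intro q
  induction q with
  | zero => intro a b c m; simp
  | succ q ih =>
    intro a b c m
    have eb : b + s * (q + 1) = (b + s) + s * q := by ring
    have ea : (fun i => a i + (q + 1) * e i) = fun i => (a i + e i) + q * e i := by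
      funext i; ring
    have em : m + (q + 1) = (m + 1) + q := by ring
    rw [eb, ea, em]
    have h2 := ih (fun i => a i + e i) b c (m + 1)
    have h1 := stepB (k := k) n d e r s a (b + s * q) c m
    rw [show b + s * q + s = b + s + s * q by ring] at h1
    have h3 := add_mem h1 h2
    rwa [sub_add_sub_cancel] at h3

/-- canonical form of an exponent vector -/
def canF (u : Fin n ⊕ Fin 3 →₀ ℕ) : Fin n ⊕ Fin 3 →₀ ℕ :=
  F n
    (fun i => u (Sum.inl i) + (u (Sum.inr 1) / r) * d i +
      ((u (Sum.inr 0) + u (Sum.inr 1) / r) / s) * e i)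
    ((u (Sum.inr 0) + u (Sum.inr 1) / r) % s)
    (u (Sum.inr 1) % r)
    (u (Sum.inr 2) + (u (Sum.inr 0) + u (Sum.inr 1) / r) / s)

lemma can_mem (u : Fin n ⊕ Fin 3 →₀ ℕ) :
    (monomial u (1 : k)) - monomial (canF n d e r s u) 1 ∈ vIdeal k n d e r s := by
  set a : Fin n → ℕ := fun i => u (Sum.inl i)
  set b := u (Sum.inr 0)
  set c := u (Sum.inr 1)
  set m := u (Sum.inr 2)
  have h0 : (monomial u (1 : k)) = Pm n a b c m := by
    rw [eq_F n u, monomial_F]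
  rw [h0, canF, monomial_F]
  have h1 := iterA (k := k) n d e r s (c / r) a b (c % r) m
  rw [Nat.mod_add_div] at h1
  have h2 := iterB (k := k) n d e r s ((b + c / r) / s) (fun i => a i + (c / r) * d i)
    ((b + c / r) % s) (c % r) m
  rw [Nat.mod_add_div] at h2
  have h3 := add_mem h1 h2
  rwa [sub_add_sub_cancel] at h3

lemma inj_can (hr : 0 < r) (hs : 0 < s) (u u' : Fin n ⊕ Fin 3 →₀ ℕ)
    (h : LL n d e r s u = LL n d e r s u') : canF n d e r s u = canF n d e r s u' := by
  set a : Fin n → ℕ := fun i => u (Sum.inl i) with ha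
  set b := u (Sum.inr 0)
  set c := u (Sum.inr 1)
  set m := u (Sum.inr 2)
  set a' : Fin n → ℕ := fun i => u' (Sum.inl i) with ha'
  set b' := u' (Sum.inr 0)
  set c' := u' (Sum.inr 1)
  set m' := u' (Sum.inr 2)
  have hz' : LL n d e r s u (Sum.inr ()) = LL n d e r s u' (Sum.inr ()) := by rw [h]
  rw [LL_apply_inr, LL_apply_inr] at hz'
  have hz : c + r * b + r * s * m = c' + r * b' + r * s * m' := by exact_mod_cast hz'
  have hx : ∀ i, (a i : ℤ) - b * d i - m * ((s : ℤ) * d i + e i) =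
      (a' i : ℤ) - b' * d i - m' * ((s : ℤ) * d i + e i) := by
    intro i
    have h5 := DFunLike.congr_fun h (Sum.inl i)
    rw [LL_apply_inl, LL_apply_inl] at h5
    exact h5
  -- division data
  have hq1 : r * (c / r) + c % r = c := Nat.div_add_mod c r
  have hq1' : r * (c' / r) + c' % r = c' := Nat.div_add_mod c' r
  have e1 : r * (c / r + b + s * m) + c % r = c + r * b + r * s * m := by
    calc r * (c / r + b + s * m) + c % r
        = (r * (c / r) + c % r) + (r * b + r * s * m) := by ring
      _ = c + r * b + r * s * m := by rw [hq1]; ring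
  have e1' : r * (c' / r + b' + s * m') + c' % r = c' + r * b' + r * s * m' := by
    calc r * (c' / r + b' + s * m') + c' % r
        = (r * (c' / r) + c' % r) + (r * b' + r * s * m') := by ring
      _ = c' + r * b' + r * s * m' := by rw [hq1']; ring
  have key1 : r * (c / r + b + s * m) + c % r = r * (c' / r + b' + s * m') + c' % r := by
    rw [e1, e1', hz]
  obtain ⟨hc0, hQ⟩ := uniq (Nat.mod_lt _ hr) (Nat.mod_lt _ hr) key1
  -- hQ : c / r + b + s * m = c' / r + b' + s * m'
  have hq2 : s * ((b + c / r) / s) + (b + c / r) % s = b + c / r := Nat.div_add_mod _ s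
  have hq2' : s * ((b' + c' / r) / s) + (b' + c' / r) % s = b' + c' / r := Nat.div_add_mod _ s
  have e2 : s * ((b + c / r) / s + m) + (b + c / r) % s = c / r + b + s * m := by
    calc s * ((b + c / r) / s + m) + (b + c / r) % s
        = (s * ((b + c / r) / s) + (b + c / r) % s) + s * m := by ring
      _ = c / r + b + s * m := by rw [hq2]; ring
  have e2' : s * ((b' + c' / r) / s + m') + (b' + c' / r) % s = c' / r + b' + s * m' := by
    calc s * ((b' + c' / r) / s + m') + (b' + c' / r) % s
        = (s * ((b' + c' / r) / s) + (b' + c' / r) % s) + s * m' := by ring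
      _ = c' / r + b' + s * m' := by rw [hq2']; ring
  have key2 : s * ((b + c / r) / s + m) + (b + c / r) % s
      = s * ((b' + c' / r) / s + m') + (b' + c' / r) % s := by
    rw [e2, e2', hQ]
  obtain ⟨hb0, hM⟩ := uniq (Nat.mod_lt _ hs) (Nat.mod_lt _ hs) key2
  -- now prove equality of canonical forms
  have hA : (fun i => a i + (c / r) * d i + ((b + c / r) / s) * e i)
      = fun i => a' i + (c' / r) * d i + ((b' + c' / r) / s) * e i := by
    funext i
    have hQz : ((c / r : ℕ) : ℤ) + b + s * m = ((c' / r : ℕ) : ℤ) + b' + s * m' := by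
      exact_mod_cast hQ
    have hMz : (((b + c / r) / s : ℕ) : ℤ) + m = (((b' + c' / r) / s : ℕ) : ℤ) + m' := by
      exact_mod_cast hM
    have := hx i
    have goal : ((a i : ℤ) + ((c / r : ℕ) : ℤ) * d i + (((b + c / r) / s : ℕ) : ℤ) * e i)
        = (a' i : ℤ) + ((c' / r : ℕ) : ℤ) * d i + (((b' + c' / r) / s : ℕ) : ℤ) * e i := by
      linear_combination this + (d i : ℤ) * hQz + (e i : ℤ) * hMz
    exact_mod_cast goal
  rw [canF, canF, hA, hb0, hc0, show m + (b + c / r) / s = m' + (b' + c' / r) / s by omega]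

lemma gv_inr0 : gv n d e r s (Sum.inr 0) = Finsupp.single (Sum.inr ()) (r : ℤ) - Dv n d := rfl

lemma gv_inr1 : gv n d e r s (Sum.inr 1) = Finsupp.single (Sum.inr ()) 1 := rfl

lemma gv_inr2 : gv n d e r s (Sum.inr 2) =
    Finsupp.single (Sum.inr ()) ((r : ℤ) * s) - ((s : ℤ) • Dv n d + Dv n e) := rfl

lemma psi_X (j : Fin n ⊕ Fin 3) :
    psi n d e r s (X j : MvPolynomial (Fin n ⊕ Fin 3) k)
      = AddMonoidAlgebra.single (gv n d e r s j) 1 :=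
  aeval_X _ j

lemma psi_prod (f : Fin n → ℕ) :
    psi n d e r s (∏ i, X (Sum.inl i) ^ f i : MvPolynomial (Fin n ⊕ Fin 3) k)
      = AddMonoidAlgebra.single (∑ i, Finsupp.single (Sum.inl i) (f i : ℤ)) 1 := by
  rw [map_prod]
  simp only [map_pow, psi_X]
  simp only [AddMonoidAlgebra.single_pow, one_pow]
  rw [AddMonoidAlgebra.prod_single]
  congr 1
  · refine Finset.sum_congr rfl fun i _ => ?_
    show f i • Finsupp.single (Sum.inl i) (1 : ℤ) = _
    rw [Finsupp.smul_single]
    norm_num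
  · simp

lemma span_le_ker :
    vIdeal k n d e r s ≤ RingHom.ker (psi n d e r s : MvPolynomial (Fin n ⊕ Fin 3) k →ₐ[k] _) := by
  rw [vIdeal, Ideal.span_le]
  rintro p (rfl | rfl) <;> rw [SetLike.mem_coe, RingHom.mem_ker]
  · rw [map_sub, map_mul, psi_prod, map_pow, psi_X, psi_X]
    rw [AddMonoidAlgebra.single_mul_single, AddMonoidAlgebra.single_pow, sub_eq_zero]
    congr 1
    · rw [gv_inr0, gv_inr1, ← Dv]
      rw [Finsupp.smul_single]
      norm_num
    · norm_num
  · rw [map_sub, map_mul, psi_prod, map_pow, psi_X, psi_X]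
    rw [AddMonoidAlgebra.single_mul_single, AddMonoidAlgebra.single_pow, sub_eq_zero]
    congr 1
    · rw [gv_inr2, gv_inr0, ← Dv]
      rw [smul_sub, Finsupp.smul_single]
      have hsd : (s : ℕ) • Dv n d = (s : ℤ) • Dv n d := (natCast_zsmul _ _).symm
      rw [hsd, show (s : ℕ) • (r : ℤ) = (r : ℤ) * s by rw [nsmul_eq_mul]; ring]
      abel
    · norm_num

lemma ker_eq (hr : 0 < r) (hs : 0 < s) :
    vIdeal k n d e r s
      = RingHom.ker (psi n d e r s : MvPolynomial (Fin n ⊕ Fin 3) k →ₐ[k] _) := by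
  apply le_antisymm (span_le_ker n d e r s)
  intro p hp
  rw [RingHom.mem_ker] at hp
  set I := vIdeal k n d e r s with hI
  set pi := Ideal.Quotient.mkₐ k I with hpi
  classical
  set hfun : GG n → (MvPolynomial (Fin n ⊕ Fin 3) k ⧸ I) := fun γ =>
    if hγ : ∃ u, LL n d e r s u = γ then pi (monomial (canF n d e r s hγ.choose) 1) else 0
    with hfun_def
  have hkey : ∀ q : MvPolynomial (Fin n ⊕ Fin 3) k,
      Finsupp.linearCombination k hfun (psi n d e r s q).coeff = pi q := by
    intro q
    induction q using MvPolynomial.induction_on' with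
    | add p1 p2 hp1 hp2 => rw [map_add, AddMonoidAlgebra.coeff_add, map_add, map_add, hp1, hp2]
    | monomial u c =>
      rw [psi_monomial]
      rw [show (AddMonoidAlgebra.single (LL n d e r s u) c : AddMonoidAlgebra k (GG n)).coeff
        = Finsupp.single (LL n d e r s u) c from rfl]
      rw [Finsupp.linearCombination_single]
      have hex : ∃ w, LL n d e r s w = LL n d e r s u := ⟨u, rfl⟩
      rw [hfun_def]
      simp only [dif_pos hex]
      have hcan : canF n d e r s hex.choose = canF n d e r s u :=
        inj_can n d e r s hr hs _ _ hex.choose_spec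
      rw [hcan]
      have h2 : pi (monomial (canF n d e r s u) (1:k)) = pi (monomial u 1) := by
        rw [hpi]
        simp only [Ideal.Quotient.mkₐ_eq_mk]
        exact (Ideal.Quotient.eq.mpr (by
          have := can_mem (k := k) n d e r s u
          exact neg_mem_iff.mp (by rwa [neg_sub])))
      rw [h2, show (monomial u c : MvPolynomial (Fin n ⊕ Fin 3) k) = c • monomial u 1 by
        rw [smul_monomial, smul_eq_mul, mul_one], map_smul]
  have hz0 := hkey p
  rw [hp, AddMonoidAlgebra.coeff_zero, map_zero] at hz0
  have hz : Ideal.Quotient.mk I p = 0 := by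
    rw [hpi] at hz0
    rw [← Ideal.Quotient.mkₐ_eq_mk k I]
    exact hz0.symm
  exact (Ideal.Quotient.eq_zero_iff_mem).mp hz

end VProof

open VProof in
/-- `V = k[X₁,…,Xₙ,Y,Z,T]/(X^d Y − Z^r, X^e T − Y^s)` is an integral domain when all
entries of `d`, `e` are ≥ 1, `r ≥ 2` and `s ≥ 2`. -/
theorem stmt11 {k : Type*} [Field k] (n : ℕ) (hn : 1 ≤ n) (d e : Fin n → ℕ)
    (hd : ∀ i, 1 ≤ d i) (he : ∀ i, 1 ≤ e i) (r s : ℕ) (hr : 2 ≤ r) (hs : 2 ≤ s) :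
    IsDomain (MvPolynomial (Fin n ⊕ Fin 3) k ⧸ vIdeal k n d e r s) := by
  have h := VProof.ker_eq (k := k) n d e r s (by omega) (by omega)
  rw [h]
  haveI : IsDomain (AddMonoidAlgebra k (GG n)) := NoZeroDivisors.to_isDomain _
  haveI : (RingHom.ker (psi n d e r s : MvPolynomial (Fin n ⊕ Fin 3) k →ₐ[k] _)).IsPrime :=
    RingHom.ker_isPrime _
  exact Ideal.Quotient.isDomain _

end
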